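/- Let S = (V, E, \sigma) be a signed graph, k, r \in \mathbb{N}, and w_1, ..., w_k: V \to \mathbb{Z} weight functions. Let R := \{v \in V : \exists i, w_i(v) \ne 0\}. If the underlying graph G contains a subtree T that has at least r leaves belonging to R, then there exists i \in [k] such that alt(S, w_i) \ge r / (2k). -/

import Mathlib

open Finset

open SimpleGraph in
private lemma prod_pm (l : List ℤ) (h : ∀ x ∈ l, x = 1 ∨ x = -1) :
    l.prod = 1 ∨ l.prod = -1 := by
  induction l with
  | nil => left; simp
  | cons a l ih =>
    rcases h a List.mem_cons_self with ha | ha <;>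
      rcases ih (fun x hx => h x (List.mem_cons_of_mem _ hx)) with hl | hl <;>
        simp [ha, hl]

private lemma subgraph_acyclic {V : Type*} {G : SimpleGraph V} {H K : G.Subgraph}
    (hle : H ≤ K) (hK : K.coe.IsAcyclic) : H.coe.IsAcyclic := by
  intro v c hc
  exact hK _ (hc.map (SimpleGraph.Subgraph.inclusion.injective hle))

private lemma abstract_core {α : Type*} [Fintype α] [DecidableEq α]
    (ρ : α) (par : α → α) (d : α → ℕ) (g : α → ℤ) (L : Finset α)
    (hpar : par ρ = ρ)
    (hd : ∀ v, v ≠ ρ → d (par v) + 1 = d v)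
    (hL : ∀ u ∈ L, (1:ℤ) ≤ |g u| ∧ u ≠ ρ ∧ ∀ x, par x = u → x = u)
    (hL1 : 1 ≤ L.card) :
    ∃ s : Finset α, ρ ∈ s ∧ (∀ v ∈ s, v ≠ ρ → par v ∈ s) ∧
      (L.card : ℤ) ≤ 2 * |∑ x ∈ s, g x| := by
  classical
  set reach : α → α → Prop := fun u v => ∃ n, par^[n] u = v with hreach_def
  have reach_refl : ∀ u, reach u u := fun u => ⟨0, rfl⟩
  have reach_step : ∀ u v, reach (par u) v → reach u v := by
    rintro u v ⟨n, hn⟩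
    exact ⟨n + 1, by rwa [Function.iterate_succ_apply]⟩
  have reach_trans : ∀ u v x, reach u v → reach v x → reach u x := by
    rintro u v x ⟨n, hn⟩ ⟨m, hm⟩
    exact ⟨m + n, by rw [Function.iterate_add_apply, hn, hm]⟩
  have d_par_le : ∀ u, d (par u) ≤ d u := by
    intro u
    by_cases hu : u = ρ
    · rw [hu, hpar]
    · have := hd u hu; omega
  have reach_d : ∀ u v, reach u v → d v ≤ d u := by
    rintro u v ⟨n, hn⟩
    induction n generalizing u with
    | zero => rw [Function.iterate_zero_apply] at hn; subst hn; exact le_rfl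
    | succ n ih =>
      rw [Function.iterate_succ_apply] at hn
      exact le_trans (ih _ hn) (d_par_le u)
  have reach_rho : ∀ u, reach u ρ := by
    have : ∀ n u, d u ≤ n → reach u ρ := by
      intro n
      induction n with
      | zero =>
        intro u hu
        by_cases h : u = ρ
        · rw [h]; exact reach_refl ρ
        · have := hd u h; omega
      | succ n ih =>
        intro u hu
        by_cases h : u = ρ
        · rw [h]; exact reach_refl ρ
        · have hdu := hd u h
          exact reach_step _ _ (ih (par u) (by omega))
    exact fun u => this (d u) u le_rfl
  set Desc : α → Finset α := fun v => univ.filter (fun u => reach u v) with hDesc_def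
  have mem_Desc : ∀ u v, u ∈ Desc v ↔ reach u v := by
    intro u v; simp [hDesc_def]
  have self_Desc : ∀ v, v ∈ Desc v := fun v => (mem_Desc v v).2 (reach_refl v)
  -- main induction
  have main : ∀ N v, (Desc v).card ≤ N →
      ∃ s1 s2 : Finset α, s1 ⊆ Desc v ∧ s2 ⊆ Desc v ∧
        (s1 = ∅ ∨ (v ∈ s1 ∧ ∀ x ∈ s1, x ≠ v → par x ∈ s1)) ∧
        (s2 = ∅ ∨ (v ∈ s2 ∧ ∀ x ∈ s2, x ≠ v → par x ∈ s2)) ∧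
        (((L ∩ Desc v).card : ℤ) ≤ ∑ x ∈ s1, g x - ∑ x ∈ s2, g x) := by
    intro N
    induction N with
    | zero =>
      intro v hv
      have := card_le_card (singleton_subset_iff.2 (self_Desc v))
      simp only [card_singleton] at this
      omega
    | succ N ih =>
      intro v hv
      by_cases hvL : v ∈ L
      · -- v is marked, hence childless
        obtain ⟨hg1, hvρ, hchild⟩ := hL v hvL
        have hDv : Desc v = {v} := by
          ext u
          rw [mem_Desc, mem_singleton]
          constructor
          · rintro ⟨n, hn⟩
            induction n generalizing u with
            | zero => exact hn
            | succ n ihn =>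
              rw [Function.iterate_succ_apply'] at hn
              exact ihn _ (hchild _ hn)
          · rintro rfl; exact reach_refl u
        have hcard : (L ∩ Desc v).card = 1 := by
          rw [hDv]
          have : L ∩ {v} = {v} := by
            ext x; simp only [mem_inter, mem_singleton]
            exact ⟨fun h => h.2, fun h => ⟨h ▸ hvL, h⟩⟩
          rw [this, card_singleton]
        rcases le_or_gt 0 (g v) with hgv | hgv
        · refine ⟨{v}, ∅, by rw [hDv], by simp, Or.inr ⟨mem_singleton_self v, by simp⟩,
            Or.inl rfl, ?_⟩
          rw [hcard]
          rw [abs_of_nonneg hgv] at hg1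
          simp; omega
        · refine ⟨∅, {v}, by simp, by rw [hDv], Or.inl rfl,
            Or.inr ⟨mem_singleton_self v, by simp⟩, ?_⟩
          rw [hcard]
          rw [abs_of_neg hgv] at hg1
          simp; omega
      · -- recursive case
        set C : Finset α := univ.filter (fun c => par c = v ∧ c ≠ v) with hC_def
        have mem_C : ∀ c, c ∈ C ↔ par c = v ∧ c ≠ v := by intro c; simp [hC_def]
        have F1 : ∀ c ∈ C, Desc c ⊆ Desc v := by
          intro c hc u hu
          rw [mem_Desc] at hu ⊢
          exact reach_trans _ _ _ hu ⟨1, by simpa using ((mem_C c).1 hc).1⟩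
        have F2 : ∀ c ∈ C, v ∉ Desc c := by
          intro c hc hvc
          obtain ⟨hpc, hcv⟩ := (mem_C c).1 hc
          have hcρ : c ≠ ρ := by
            rintro rfl
            exact hcv (hpar.symm.trans hpc)
          have hdc := hd c hcρ
          rw [hpc] at hdc
          have := reach_d _ _ ((mem_Desc v c).1 hvc)
          omega
        have F4 : ∀ u ∈ Desc v, u = v ∨ ∃ c ∈ C, u ∈ Desc c := by
          intro u hu
          obtain ⟨n, hn⟩ := (mem_Desc u v).1 hu
          clear hu
          induction n generalizing u with
          | zero => exact Or.inl hn
          | succ n ihn =>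
            rw [Function.iterate_succ_apply] at hn
            rcases ihn (par u) hn with h | ⟨c, hc, hpc⟩
            · by_cases huv : u = v
              · exact Or.inl huv
              · exact Or.inr ⟨u, (mem_C u).2 ⟨h, huv⟩, self_Desc u⟩
            · exact Or.inr ⟨c, hc, (mem_Desc u c).2 (reach_step _ _ ((mem_Desc _ _).1 hpc))⟩
        have F3 : ∀ c ∈ C, ∀ c' ∈ C, c ≠ c' → Disjoint (Desc c) (Desc c') := by
          have aux : ∀ c ∈ C, ∀ c' ∈ C, c ≠ c' → ∀ u n m, n ≤ m →
              par^[n] u = c → par^[m] u = c' → False := by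
            intro c hc c' hc' hne u n m hnm hn hm
            have : par^[m - n + n] u = c' := by rwa [Nat.sub_add_cancel hnm]
            rw [Function.iterate_add_apply, hn] at this
            rcases Nat.eq_zero_or_pos (m - n) with h0 | h0
            · rw [h0] at this; exact hne (this.symm ▸ rfl)
            · obtain ⟨j, hj⟩ := Nat.exists_eq_succ_of_ne_zero (Nat.pos_iff_ne_zero.1 h0)
              rw [hj, Function.iterate_succ_apply, ((mem_C c).1 hc).1] at this
              exact F2 c' hc' ((mem_Desc v c').2 ⟨j, this⟩)
          intro c hc c' hc' hne
          rw [Finset.disjoint_left]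
          intro u huc huc'
          obtain ⟨n, hn⟩ := (mem_Desc u c).1 huc
          obtain ⟨m, hm⟩ := (mem_Desc u c').1 huc'
          rcases le_total n m with h | h
          · exact aux c hc c' hc' hne u n m h hn hm
          · exact aux c' hc' c hc hne.symm u m n h hm hn
        have hsmall : ∀ c ∈ C, (Desc c).card ≤ N := by
          intro c hc
          have h1 : Desc c ⊆ (Desc v).erase v :=
            fun u hu => mem_erase.2 ⟨fun h => F2 c hc (h ▸ hu), F1 c hc hu⟩
          have := card_le_card h1
          rw [card_erase_of_mem (self_Desc v)] at this
          omega
        have key : ∀ c, ∃ s1 s2 : Finset α, c ∈ C →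
            s1 ⊆ Desc c ∧ s2 ⊆ Desc c ∧
            (s1 = ∅ ∨ (c ∈ s1 ∧ ∀ x ∈ s1, x ≠ c → par x ∈ s1)) ∧
            (s2 = ∅ ∨ (c ∈ s2 ∧ ∀ x ∈ s2, x ≠ c → par x ∈ s2)) ∧
            (((L ∩ Desc c).card : ℤ) ≤ ∑ x ∈ s1, g x - ∑ x ∈ s2, g x) := by
          intro c
          by_cases hc : c ∈ C
          · obtain ⟨s1, s2, h⟩ := ih c (hsmall c hc)
            exact ⟨s1, s2, fun _ => h⟩
          · exact ⟨∅, ∅, fun h => absurd h hc⟩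
        choose f1 f2 hf using key
        have hdisj1 : (C : Set α).PairwiseDisjoint f1 := by
          intro c hc c' hc' hne
          exact Finset.disjoint_of_subset_left ((hf c hc).1)
            (Finset.disjoint_of_subset_right ((hf c' hc').1) (F3 c hc c' hc' hne))
        have hdisj2 : (C : Set α).PairwiseDisjoint f2 := by
          intro c hc c' hc' hne
          exact Finset.disjoint_of_subset_left ((hf c hc).2.1)
            (Finset.disjoint_of_subset_right ((hf c' hc').2.1) (F3 c hc c' hc' hne))
        have hvnot1 : v ∉ C.biUnion f1 := by
          rw [mem_biUnion]
          rintro ⟨c, hc, hv1⟩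
          exact F2 c hc ((hf c hc).1 hv1)
        have hvnot2 : v ∉ C.biUnion f2 := by
          rw [mem_biUnion]
          rintro ⟨c, hc, hv2⟩
          exact F2 c hc ((hf c hc).2.1 hv2)
        refine ⟨insert v (C.biUnion f1), insert v (C.biUnion f2), ?_, ?_, ?_, ?_, ?_⟩
        · intro x hx
          rcases mem_insert.1 hx with rfl | hx
          · exact self_Desc x
          · obtain ⟨c, hc, hxc⟩ := mem_biUnion.1 hx
            exact F1 c hc ((hf c hc).1 hxc)
        · intro x hx
          rcases mem_insert.1 hx with rfl | hx
          · exact self_Desc x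
          · obtain ⟨c, hc, hxc⟩ := mem_biUnion.1 hx
            exact F1 c hc ((hf c hc).2.1 hxc)
        · refine Or.inr ⟨mem_insert_self v _, ?_⟩
          intro x hx hxv
          rcases mem_insert.1 hx with rfl | hx
          · exact absurd rfl hxv
          · obtain ⟨c, hc, hxc⟩ := mem_biUnion.1 hx
            rcases (hf c hc).2.2.1 with h0 | ⟨hcmem, hclos⟩
            · rw [h0] at hxc; exact absurd hxc (notMem_empty x)
            · by_cases hxch : x = c
              · subst hxch
                rw [((mem_C x).1 hc).1]
                exact mem_insert_self v _
              · exact mem_insert_of_mem (mem_biUnion.2 ⟨c, hc, hclos x hxc hxch⟩)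
        · refine Or.inr ⟨mem_insert_self v _, ?_⟩
          intro x hx hxv
          rcases mem_insert.1 hx with rfl | hx
          · exact absurd rfl hxv
          · obtain ⟨c, hc, hxc⟩ := mem_biUnion.1 hx
            rcases (hf c hc).2.2.2.1 with h0 | ⟨hcmem, hclos⟩
            · rw [h0] at hxc; exact absurd hxc (notMem_empty x)
            · by_cases hxch : x = c
              · subst hxch
                rw [((mem_C x).1 hc).1]
                exact mem_insert_self v _
              · exact mem_insert_of_mem (mem_biUnion.2 ⟨c, hc, hclos x hxc hxch⟩)
        · -- the sum bound
          have hsum1 : ∑ x ∈ insert v (C.biUnion f1), g x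
              = g v + ∑ c ∈ C, ∑ x ∈ f1 c, g x := by
            rw [Finset.sum_insert hvnot1, Finset.sum_biUnion hdisj1]
          have hsum2 : ∑ x ∈ insert v (C.biUnion f2), g x
              = g v + ∑ c ∈ C, ∑ x ∈ f2 c, g x := by
            rw [Finset.sum_insert hvnot2, Finset.sum_biUnion hdisj2]
          have hcount : (L ∩ Desc v).card ≤ ∑ c ∈ C, (L ∩ Desc c).card := by
            have hsub : L ∩ Desc v ⊆ C.biUnion (fun c => L ∩ Desc c) := by
              intro u hu
              obtain ⟨huL, huD⟩ := mem_inter.1 hu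
              rcases F4 u huD with rfl | ⟨c, hc, hcd⟩
              · exact absurd huL hvL
              · exact mem_biUnion.2 ⟨c, hc, mem_inter.2 ⟨huL, hcd⟩⟩
            exact le_trans (card_le_card hsub) card_biUnion_le
          have hterm : ∀ c ∈ C, ((L ∩ Desc c).card : ℤ)
              ≤ ∑ x ∈ f1 c, g x - ∑ x ∈ f2 c, g x := fun c hc => (hf c hc).2.2.2.2
          calc ((L ∩ Desc v).card : ℤ)
              ≤ ∑ c ∈ C, ((L ∩ Desc c).card : ℤ) := by exact_mod_cast hcount
            _ ≤ ∑ c ∈ C, (∑ x ∈ f1 c, g x - ∑ x ∈ f2 c, g x) := Finset.sum_le_sum hterm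
            _ = _ := by rw [hsum1, hsum2, Finset.sum_sub_distrib]; ring
  -- conclude
  obtain ⟨s1, s2, hs1D, hs2D, hg1, hg2, hsum⟩ := main (Desc ρ).card ρ le_rfl
  have hLD : L ∩ Desc ρ = L := by
    apply Finset.inter_eq_left.2
    intro u _
    exact (mem_Desc u ρ).2 (reach_rho u)
  rw [hLD] at hsum
  have habs : (L.card : ℤ) ≤ |∑ x ∈ s1, g x| + |∑ x ∈ s2, g x| := by
    have h1 := le_abs_self (∑ x ∈ s1, g x)
    have h2 := neg_abs_le (∑ x ∈ s2, g x)
    linarith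
  have hρgood : ∀ s : Finset α, s ⊆ Desc ρ →
      (s = ∅ ∨ (ρ ∈ s ∧ ∀ x ∈ s, x ≠ ρ → par x ∈ s)) →
      (L.card : ℤ) ≤ 2 * |∑ x ∈ s, g x| →
      ∃ s' : Finset α, ρ ∈ s' ∧ (∀ v ∈ s', v ≠ ρ → par v ∈ s') ∧
        (L.card : ℤ) ≤ 2 * |∑ x ∈ s', g x| := by
    intro s hsD hgood hb
    rcases hgood with rfl | ⟨hρs, hclos⟩
    · exfalso
      rw [Finset.sum_empty, abs_zero, mul_zero] at hb
      omega
    · exact ⟨s, hρs, hclos, hb⟩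
  rcases le_total |∑ x ∈ s2, g x| |∑ x ∈ s1, g x| with h | h
  · exact hρgood s1 hs1D hg1 (by omega)
  · exact hρgood s2 hs2D hg2 (by omega)

open SimpleGraph in
private lemma tree_data {α : Type*} (TT : SimpleGraph α) (hT : TT.IsTree)
    (σ2 : Sym2 α → ℤ) (hσ2 : ∀ e ∈ TT.edgeSet, σ2 e = 1 ∨ σ2 e = -1) (ρ : α) :
    ∃ (par : α → α) (d : α → ℕ) (ε : α → ℤ),
      par ρ = ρ ∧
      (∀ v, v ≠ ρ → d (par v) + 1 = d v ∧ TT.Adj (par v) v) ∧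
      (∀ v, ε v = 1 ∨ ε v = -1) ∧
      (∀ a b, TT.Adj a b → σ2 s(a, b) = ε a * ε b) := by
  classical
  have hconn := hT.isConnected
  have huniq : ∀ {x y : α} (p q : TT.Walk x y), p.IsPath → q.IsPath → p = q := by
    intro x y p q hp hq
    exact congrArg Subtype.val (hT.IsAcyclic.path_unique ⟨p, hp⟩ ⟨q, hq⟩)
  set p : ∀ v, TT.Walk ρ v := fun v => ((hconn.preconnected ρ v).some.toPath : TT.Path ρ v).val
    with hp_def
  have hp : ∀ v, (p v).IsPath := fun v => ((hconn.preconnected ρ v).some.toPath).property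
  have ML : ∀ v, v ≠ ρ → ∃ (u : α) (h : TT.Adj u v),
      p v = (p u).append (Walk.cons h Walk.nil) := by
    intro v hv
    obtain ⟨u, hadj, w', hw⟩ := Walk.exists_eq_cons_of_ne hv (p v).reverse
    have hrev : p v = w'.reverse.append (Walk.cons hadj.symm Walk.nil) := by
      have := congrArg Walk.reverse hw
      rwa [Walk.reverse_reverse, Walk.reverse_cons] at this
    have hw' : w'.reverse.IsPath := by
      have h1 : (p v).reverse.IsPath := (hp v).reverse
      rw [hw] at h1
      exact (Walk.IsPath.of_cons h1).reverse
    have : w'.reverse = p u := huniq _ _ hw' (hp u)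
    exact ⟨u, hadj.symm, by rw [hrev, this]⟩
  set par : α → α := fun v => if h : v = ρ then ρ else (ML v h).choose with hpar_def
  have hpar_ρ : par ρ = ρ := by simp [hpar_def]
  have hpar_spec : ∀ v (hv : v ≠ ρ), ∃ h : TT.Adj (par v) v,
      p v = (p (par v)).append (Walk.cons h Walk.nil) := by
    intro v hv
    have : par v = (ML v hv).choose := by simp [hpar_def, hv]
    rw [this]
    exact (ML v hv).choose_spec
  set d : α → ℕ := fun v => (p v).length with hd_def
  set ε : α → ℤ := fun v => ((p v).edges.map σ2).prod with hε_def
  have hεsign : ∀ v, ε v = 1 ∨ ε v = -1 := by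
    intro v
    apply prod_pm
    intro x hx
    obtain ⟨e, he, rfl⟩ := List.mem_map.1 hx
    exact hσ2 e ((p v).edges_subset_edgeSet he)
  have hd_adj : ∀ v, v ≠ ρ → d (par v) + 1 = d v ∧ TT.Adj (par v) v := by
    intro v hv
    obtain ⟨h, hpv⟩ := hpar_spec v hv
    refine ⟨?_, h⟩
    rw [hd_def]
    simp only []
    rw [hpv, Walk.length_append]
    simp
  have hε_rec : ∀ (a b : α) (h : TT.Adj a b),
      p b = (p a).append (Walk.cons h Walk.nil) → ε b = ε a * σ2 s(a, b) := by
    intro a b h heq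
    rw [hε_def]
    simp only []
    rw [heq, Walk.edges_append]
    simp
  have ADJ : ∀ (a b : α), TT.Adj a b →
      ε b = ε a * σ2 s(a, b) ∨ ε a = ε b * σ2 s(a, b) := by
    intro a b hadj
    by_cases hb : b ∈ (p a).support
    · right
      have htk : ((p a).takeUntil b hb).IsPath := (hp a).takeUntil hb
      have hdr : ((p a).dropUntil b hb).IsPath := (hp a).dropUntil hb
      have hsingle : (Walk.cons hadj.symm (Walk.nil : TT.Walk a a)).IsPath := by
        rw [Walk.cons_isPath_iff]
        exact ⟨Walk.IsPath.nil, by simp [hadj.ne']⟩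
      have hdr_eq : (p a).dropUntil b hb = Walk.cons hadj.symm Walk.nil :=
        huniq _ _ hdr hsingle
      have htk_eq : (p a).takeUntil b hb = p b := huniq _ _ htk (hp b)
      have : p a = (p b).append (Walk.cons hadj.symm Walk.nil) := by
        rw [← htk_eq, ← hdr_eq, Walk.take_spec]
      have := hε_rec b a hadj.symm this
      rwa [Sym2.eq_swap] at this
    · left
      have hq : ((p a).append (Walk.cons hadj Walk.nil)).IsPath := by
        rw [Walk.isPath_def, Walk.support_append]
        simp only [Walk.support_cons, Walk.support_nil, List.tail_cons]
        rw [List.nodup_append]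
        refine ⟨(hp a).2, List.nodup_singleton b, ?_⟩
        intro x hx hx2 hx2'
        rw [List.mem_singleton] at hx2'
        subst hx2'
        rintro rfl; exact hb hx
      have : (p a).append (Walk.cons hadj Walk.nil) = p b := huniq _ _ hq (hp b)
      exact hε_rec a b hadj this.symm
  refine ⟨par, d, ε, hpar_ρ, hd_adj, hεsign, ?_⟩
  intro a b hadj
  have hsq : ε a * ε a = 1 := by rcases hεsign a with h | h <;> rw [h] <;> norm_num
  have hsqb : ε b * ε b = 1 := by rcases hεsign b with h | h <;> rw [h] <;> norm_num
  rcases ADJ a b hadj with h | h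
  · rw [h, ← mul_assoc, hsq, one_mul]
  · rw [h]; ring_nf; rw [sq, hsqb, one_mul]

open SimpleGraph in
private lemma assemble {V : Type*} [Fintype V] [DecidableEq V]
    (G : SimpleGraph V) (σ : Sym2 V → ℤ)
    (k r : ℕ) (w : Fin k → V → ℤ)
    (T : G.Subgraph) (hT : T.coe.IsTree) (i : Fin k)
    (s : Finset T.verts)
    (hs_conn : (T.induce (Subtype.val '' (↑s : Set T.verts))).coe.Connected)
    (ε : T.verts → ℤ) (hε : ∀ x, ε x = 1 ∨ ε x = -1)
    (hsign : ∀ a b : T.verts, a ∈ s → b ∈ s → T.Adj ↑a ↑b → σ s(↑a, ↑b) = ε a * ε b)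
    (hbound : (r : ℚ) / (2 * k) ≤ |((∑ x ∈ s, ε x * w i ↑x : ℤ) : ℚ)|) :
    ∃ i : Fin k, ∃ T' : G.Subgraph, T'.coe.IsTree ∧
      ∃ A B : Finset V, Disjoint A B ∧ (↑A ∪ ↑B : Set V) = T'.verts ∧
        (∀ u v, T'.Adj u v → (σ s(u, v) = 1 ↔ (u ∈ A ↔ v ∈ A))) ∧
        (r : ℚ) / (2 * k) ≤ |((∑ v ∈ A, w i v - ∑ v ∈ B, w i v : ℤ) : ℚ)| := by
  classical
  set U : Set V := Subtype.val '' (↑s : Set T.verts) with hU_def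
  set T' : G.Subgraph := T.induce U with hT'_def
  have hle : T' ≤ T := by
    constructor
    · rintro x ⟨y, _, rfl⟩
      exact y.2
    · intro a b hab
      exact hab.2.2
  have htree : T'.coe.IsTree := ⟨hs_conn, subgraph_acyclic hle hT.IsAcyclic⟩
  set A : Finset V := (s.filter (fun x => ε x = 1)).image Subtype.val with hA_def
  set B : Finset V := (s.filter (fun x => ε x = -1)).image Subtype.val with hB_def
  have hmemA : ∀ x : T.verts, (↑x ∈ A ↔ x ∈ s ∧ ε x = 1) := by
    intro x
    simp only [hA_def, mem_image, mem_filter]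
    constructor
    · rintro ⟨y, ⟨hy, hεy⟩, hyx⟩
      have : y = x := Subtype.ext hyx
      subst this; exact ⟨hy, hεy⟩
    · intro ⟨hx, hεx⟩; exact ⟨x, ⟨hx, hεx⟩, rfl⟩
  have hmemB : ∀ x : T.verts, (↑x ∈ B ↔ x ∈ s ∧ ε x = -1) := by
    intro x
    simp only [hB_def, mem_image, mem_filter]
    constructor
    · rintro ⟨y, ⟨hy, hεy⟩, hyx⟩
      have : y = x := Subtype.ext hyx
      subst this; exact ⟨hy, hεy⟩
    · intro ⟨hx, hεx⟩; exact ⟨x, ⟨hx, hεx⟩, rfl⟩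
  refine ⟨i, T', htree, A, B, ?_, ?_, ?_, ?_⟩
  · rw [Finset.disjoint_left]
    intro a haA haB
    obtain ⟨y, hy, rfl⟩ := mem_image.1 haA
    rw [hmemA y] at haA
    rw [hmemB y] at haB
    rw [haA.2] at haB
    norm_num at haB
  · ext v
    simp only [Set.mem_union, mem_coe]
    constructor
    · rintro (hv | hv)
      · obtain ⟨y, hy, rfl⟩ := mem_image.1 hv
        rw [hmemA y] at hv
        exact ⟨y, hv.1, rfl⟩
      · obtain ⟨y, hy, rfl⟩ := mem_image.1 hv
        rw [hmemB y] at hv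
        exact ⟨y, hv.1, rfl⟩
    · rintro ⟨y, hy, rfl⟩
      rcases hε y with h | h
      · exact Or.inl ((hmemA y).2 ⟨hy, h⟩)
      · exact Or.inr ((hmemB y).2 ⟨hy, h⟩)
  · intro u v hadj
    obtain ⟨hu, hv, hTadj⟩ := hadj
    obtain ⟨x, hx, rfl⟩ := hu
    obtain ⟨y, hy, rfl⟩ := hv
    rw [Finset.mem_coe] at hx hy
    have hσ := hsign x y hx hy hTadj
    rw [hσ, hmemA x, hmemA y]
    rcases hε x with h1 | h1 <;> rcases hε y with h2 | h2 <;>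
      rw [h1, h2] <;> simp [hx, hy, h1, h2]
  · have hAsum : ∑ v ∈ A, w i v = ∑ x ∈ s.filter (fun x => ε x = 1), w i ↑x := by
      rw [hA_def]
      exact Finset.sum_image (fun x _ y _ h => Subtype.ext h)
    have hBsum : ∑ v ∈ B, w i v = ∑ x ∈ s.filter (fun x => ε x = -1), w i ↑x := by
      rw [hB_def]
      exact Finset.sum_image (fun x _ y _ h => Subtype.ext h)
    have hsplit : ∑ x ∈ s, ε x * w i ↑x
        = ∑ v ∈ A, w i v - ∑ v ∈ B, w i v := by
      rw [hAsum, hBsum]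
      rw [← Finset.sum_filter_add_sum_filter_not s (fun x => ε x = 1) (fun x => ε x * w i ↑x)]
      have e1 : ∑ x ∈ s.filter (fun x => ε x = 1), ε x * w i ↑x
          = ∑ x ∈ s.filter (fun x => ε x = 1), w i ↑x := by
        apply Finset.sum_congr rfl
        intro x hx
        rw [(mem_filter.1 hx).2, one_mul]
      have hfeq : s.filter (fun x => ¬ε x = 1) = s.filter (fun x => ε x = -1) := by
        apply Finset.filter_congr
        intro x _
        rcases hε x with h | h <;> simp [h]
      have e2 : ∑ x ∈ s.filter (fun x => ¬ε x = 1), ε x * w i ↑x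
          = -∑ x ∈ s.filter (fun x => ε x = -1), w i ↑x := by
        rw [hfeq, ← Finset.sum_neg_distrib]
        apply Finset.sum_congr rfl
        intro x hx
        rw [(mem_filter.1 hx).2]
        ring
      rw [e1, e2]
      ring
    rwa [hsplit] at hbound

open SimpleGraph in
/-- If the underlying graph of a signed graph `S` contains a subtree with at least `r`
leaves that are terminals (vertices with nonzero weight for one of the `k` weight
functions), then for some `i`, the alternating weight `alt(S, wᵢ)` is at least
`r / (2k)`: some subtree with its sign-bipartition witnesses this value. -/
theorem decorated_tree_gives_alt {V : Type*} [Fintype V] [DecidableEq V]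
    (G : SimpleGraph V) (σ : Sym2 V → ℤ)
    (hσ : ∀ e ∈ G.edgeSet, σ e = 1 ∨ σ e = -1)
    (k r : ℕ) (hk : 0 < k) (w : Fin k → V → ℤ)
    (R : Set V) (hR : R = {v | ∃ i, w i v ≠ 0})
    (T : G.Subgraph) (hT : T.coe.IsTree)
    (hdec : r ≤ ({v ∈ T.verts | (T.neighborSet v).ncard = 1} ∩ R).ncard) :
    ∃ i : Fin k, ∃ T' : G.Subgraph, T'.coe.IsTree ∧
      ∃ A B : Finset V, Disjoint A B ∧ (↑A ∪ ↑B : Set V) = T'.verts ∧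
        (∀ u v, T'.Adj u v → (σ s(u, v) = 1 ↔ (u ∈ A ↔ v ∈ A))) ∧
        (r : ℚ) / (2 * k) ≤ |((∑ v ∈ A, w i v - ∑ v ∈ B, w i v : ℤ) : ℚ)| := by
  classical
  haveI : Fintype T.verts := (Set.toFinite T.verts).fintype
  have h2k : (0:ℚ) < 2 * k := by positivity
  -- pigeonhole
  set S0 : Set V := {v ∈ T.verts | (T.neighborSet v).ncard = 1} ∩ R with hS0_def
  have hfin : S0.Finite := Set.toFinite _
  set F0 : Finset V := hfin.toFinset with hF0_def
  have hF0card : r ≤ F0.card := by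
    rwa [Set.ncard_eq_toFinset_card _ hfin] at hdec
  set F : Fin k → Finset V := fun i => F0.filter (fun v => w i v ≠ 0) with hF_def
  have hcover : F0 ⊆ univ.biUnion F := by
    intro v hv
    have hvR : v ∈ R := ((hfin.mem_toFinset.1 hv) : v ∈ S0).2
    rw [hR] at hvR
    obtain ⟨i, hi⟩ := hvR
    exact mem_biUnion.2 ⟨i, mem_univ _, mem_filter.2 ⟨hv, hi⟩⟩
  obtain ⟨i, -, hmax⟩ := Finset.exists_max_image (univ : Finset (Fin k))
    (fun i => (F i).card) ⟨⟨0, hk⟩, mem_univ _⟩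
  have hrk : r ≤ k * (F i).card := by
    calc r ≤ F0.card := hF0card
      _ ≤ (univ.biUnion F).card := card_le_card hcover
      _ ≤ ∑ j : Fin k, (F j).card := card_biUnion_le
      _ ≤ (univ : Finset (Fin k)).card • (F i).card :=
          Finset.sum_le_card_nsmul _ _ _ (fun j _ => hmax j (mem_univ _))
      _ = k * (F i).card := by simp [mul_comm]
  have hFmem : ∀ v ∈ F i, v ∈ T.verts ∧ (T.neighborSet v).ncard = 1 ∧ w i v ≠ 0 := by
    intro v hv
    obtain ⟨hv0, hw⟩ := mem_filter.1 hv
    have := hfin.mem_toFinset.1 hv0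
    exact ⟨this.1.1, this.1.2, hw⟩
  -- helper: singleton connected
  have hsingle_conn : ∀ x : T.verts,
      (T.induce (Subtype.val '' (↑({x} : Finset T.verts) : Set T.verts))).coe.Connected := by
    intro x
    have hxmem : (↑x : V) ∈ Subtype.val '' (↑({x} : Finset T.verts) : Set T.verts) :=
      ⟨x, by simp, rfl⟩
    haveI : Nonempty (T.induce (Subtype.val '' (↑({x} : Finset T.verts) : Set T.verts))).verts :=
      ⟨⟨↑x, hxmem⟩⟩
    refine ⟨fun a b => ?_⟩
    have ha : a = b := by
      obtain ⟨y, hy, hya⟩ := a.2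
      obtain ⟨z, hz, hzb⟩ := b.2
      apply Subtype.ext
      rw [← hya, ← hzb]
      simp only [Finset.coe_singleton, Set.mem_singleton_iff] at hy hz
      rw [hy, hz]
    rw [ha]
  by_cases hm3 : 3 ≤ (F i).card
  · -- main case
    set TT : SimpleGraph T.verts := T.coe with hTT_def
    set σ2 : Sym2 T.verts → ℤ := fun e => σ (e.map Subtype.val) with hσ2_def
    have hσ2e : ∀ e ∈ TT.edgeSet, σ2 e = 1 ∨ σ2 e = -1 := by
      intro e he
      induction e with
      | h a b =>
        rw [mem_edgeSet] at he
        have hG : G.Adj ↑a ↑b := T.adj_sub he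
        have := hσ s(↑a, ↑b) (G.mem_edgeSet.mpr hG)
        simpa [hσ2_def, Sym2.map_pair_eq] using this
    -- find a non-leaf root
    have hρex : ∃ ρ : T.verts, (T.neighborSet ↑ρ).ncard ≠ 1 := by
      by_contra hall
      push_neg at hall
      have hsub : ∀ (x y z : T.verts), TT.Adj x y → TT.Adj x z → y = z := by
        intro x y z hxy hxz
        obtain ⟨a, ha⟩ := Set.ncard_eq_one.1 (hall x)
        have h1 : (↑y : V) ∈ T.neighborSet ↑x := hxy
        have h2 : (↑z : V) ∈ T.neighborSet ↑x := hxz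
        rw [ha] at h1 h2
        exact Subtype.ext (h1.trans h2.symm)
      have hwalk : ∀ (a z : T.verts), TT.Walk a z → (z = a ∨ TT.Adj a z) := by
        intro a z wk
        induction wk with
        | nil => exact Or.inl rfl
        | @cons a' x' z' h pw ih =>
          rcases ih with rfl | hxz
          · exact Or.inr h
          · exact Or.inl (hsub _ _ _ hxz h.symm)
      -- card bound
      have hcard3 : 3 ≤ Fintype.card T.verts := by
        have himg : ((univ : Finset T.verts).filter (fun x => ↑x ∈ F i)).image Subtype.val
            = F i := by
          ext v
          simp only [mem_image, mem_filter, mem_univ, true_and]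
          constructor
          · rintro ⟨y, hy, rfl⟩; exact hy
          · intro hv
            exact ⟨⟨v, (hFmem v hv).1⟩, hv, rfl⟩
        have h1 : (F i).card ≤ Fintype.card T.verts := by
          rw [← himg, Finset.card_image_of_injective _ Subtype.val_injective]
          exact le_trans (card_le_card (subset_univ _)) (le_of_eq (card_univ))
        omega
      obtain ⟨a, b, hab⟩ := Fintype.exists_pair_of_one_lt_card (α := T.verts) (by omega)
      have hadj_ab : TT.Adj a b := by
        rcases hwalk a b ((hT.isConnected.preconnected a b).some) with h | h
        · exact absurd h.symm hab
        · exact h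
      obtain ⟨c, hc⟩ : ∃ c : T.verts, c ∉ ({a, b} : Finset T.verts) := by
        by_contra hno
        push_neg at hno
        have hsubu : (univ : Finset T.verts) ⊆ {a, b} := fun c _ => hno c
        have h4 := card_le_card hsubu
        have hc2 : ({a, b} : Finset T.verts).card ≤ 2 := by
          refine le_trans (card_insert_le _ _) ?_
          simp
        rw [card_univ] at h4
        omega
      have hca : c ≠ a := fun h => hc (by simp [h])
      have hcb : c ≠ b := fun h => hc (by simp [h])
      have hadj_ac : TT.Adj a c := by
        rcases hwalk a c ((hT.isConnected.preconnected a c).some) with h | h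
        · exact absurd h hca
        · exact h
      exact hcb (hsub a c b hadj_ac hadj_ab)
    obtain ⟨ρ, hρn⟩ := hρex
    obtain ⟨par, d, ε, hpar_ρ, hd, hεsign, hσε⟩ := tree_data TT hT σ2 hσ2e ρ
    set L : Finset T.verts := univ.filter (fun x => ↑x ∈ F i) with hL_def
    have hLcard : L.card = (F i).card := by
      have himg : L.image Subtype.val = F i := by
        ext v
        simp only [hL_def, mem_image, mem_filter, mem_univ, true_and]
        constructor
        · rintro ⟨y, hy, rfl⟩; exact hy
        · intro hv
          exact ⟨⟨v, (hFmem v hv).1⟩, hv, rfl⟩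
      rw [← himg, Finset.card_image_of_injective _ Subtype.val_injective]
    set g : T.verts → ℤ := fun x => ε x * w i ↑x with hg_def
    have hLh : ∀ u ∈ L, (1:ℤ) ≤ |g u| ∧ u ≠ ρ ∧ ∀ x, par x = u → x = u := by
      intro u hu
      have huF : ↑u ∈ F i := (mem_filter.1 hu).2
      obtain ⟨huT, hncard, hwne⟩ := hFmem _ huF
      have huρ : u ≠ ρ := by
        rintro rfl
        exact hρn hncard
      refine ⟨?_, huρ, ?_⟩
      · have hεu : |ε u| = 1 := by rcases hεsign u with h | h <;> rw [h] <;> norm_num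
        rw [hg_def]
        simp only []
        rw [abs_mul, hεu, one_mul]
        exact Int.one_le_abs (by exact hwne)
      · intro y hpy
        by_contra hyu
        have hyρ : y ≠ ρ := by
          rintro rfl
          rw [hpar_ρ] at hpy
          exact huρ hpy.symm
        obtain ⟨hdy, hady⟩ := hd y hyρ
        rw [hpy] at hdy hady
        obtain ⟨hdu, hadu⟩ := hd u huρ
        obtain ⟨a, hna⟩ := Set.ncard_eq_one.1 hncard
        have h1 : (↑y : V) ∈ T.neighborSet ↑u := hady
        have h2 : (↑(par u) : V) ∈ T.neighborSet ↑u := hadu.symm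
        rw [hna] at h1 h2
        have : y = par u := Subtype.ext (h1.trans h2.symm)
        rw [this] at hdy
        omega
    obtain ⟨s, hρs, hclos, hsbound⟩ := abstract_core ρ par d g L hpar_ρ
      (fun v hv => (hd v hv).1) hLh (by omega)
    -- build connectivity
    set U : Set V := Subtype.val '' (↑s : Set T.verts) with hU_def
    have hmemU : ∀ x : T.verts, x ∈ s → (↑x : V) ∈ U := fun x hx => ⟨x, hx, rfl⟩
    have hconn' : (T.induce U).coe.Connected := by
      haveI : Nonempty (T.induce U).verts := ⟨⟨↑ρ, hmemU ρ hρs⟩⟩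
      have key : ∀ n (x : T.verts) (hx : x ∈ s), d x ≤ n →
          (T.induce U).coe.Reachable ⟨↑x, hmemU x hx⟩ ⟨↑ρ, hmemU ρ hρs⟩ := by
        intro n
        induction n with
        | zero =>
          intro x hx hdx
          by_cases hxρ : x = ρ
          · subst hxρ; exact Reachable.refl _
          · have := (hd x hxρ).1; omega
        | succ n ih =>
          intro x hx hdx
          by_cases hxρ : x = ρ
          · subst hxρ; exact Reachable.refl _
          · have hpx : par x ∈ s := hclos x hx hxρ
            obtain ⟨hdpx, hadx⟩ := hd x hxρ
            have hTadj : T.Adj ↑(par x) ↑x := hadx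
            have hadj' : (T.induce U).coe.Adj ⟨↑(par x), hmemU _ hpx⟩ ⟨↑x, hmemU x hx⟩ := by
              exact ⟨hmemU _ hpx, hmemU x hx, hTadj⟩
            exact (hadj'.symm.reachable).trans (ih (par x) hpx (by omega))
      refine ⟨fun a b => ?_⟩
      have hpt : ∀ (a : (T.induce U).verts),
          (T.induce U).coe.Reachable a ⟨↑ρ, hmemU ρ hρs⟩ := by
        intro a
        obtain ⟨y, hy, hya⟩ := a.2
        rw [Finset.mem_coe] at hy
        have ha : a = ⟨↑y, hmemU y hy⟩ := Subtype.ext hya.symm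
        rw [ha]
        exact key (d y) y hy le_rfl
      exact (hpt a).trans (hpt b).symm
    -- apply assemble
    apply assemble G σ k r w T hT i s hconn' ε hεsign
    · intro a b ha hb hTadj
      have hTTadj : TT.Adj a b := hTadj
      have := hσε a b hTTadj
      rw [hσ2_def] at this
      simpa [Sym2.map_pair_eq] using this
    · -- the bound
      rw [div_le_iff₀ h2k]
      set t : ℤ := ∑ x ∈ s, ε x * w i ↑x with ht_def
      have hts : t = ∑ x ∈ s, g x := by rw [ht_def, hg_def]
      have h1 : (r:ℤ) ≤ k * L.card := by
        rw [hLcard]; exact_mod_cast hrk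
      have h2 : (L.card : ℤ) ≤ 2 * |t| := by rw [hts]; exact hsbound
      have h3 : (r:ℤ) ≤ k * (2 * |t|) :=
        le_trans h1 (mul_le_mul_of_nonneg_left h2 (by positivity))
      calc (r:ℚ) = ((r:ℤ):ℚ) := by norm_num
        _ ≤ ((k * (2 * |t|) : ℤ) : ℚ) := by exact_mod_cast h3
        _ = |(t:ℚ)| * (2 * k) := by push_cast; ring
  · -- small cases
    rcases Nat.eq_zero_or_pos (F i).card with h0 | h1
    · -- r = 0
      have hr0 : r = 0 := by rw [h0, Nat.mul_zero] at hrk; omega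
      obtain ⟨x⟩ : Nonempty T.verts := hT.isConnected.nonempty
      apply assemble G σ k r w T hT i {x} (hsingle_conn x) (fun _ => 1) (fun _ => Or.inl rfl)
      · intro a b ha hb hadj
        rw [Finset.mem_singleton] at ha hb
        subst ha; subst hb
        exact absurd rfl (T.adj_sub hadj).ne
      · rw [hr0]
        simp only [Nat.cast_zero, zero_div]
        exact abs_nonneg _
    · obtain ⟨x, hxF⟩ := card_pos.1 h1
      obtain ⟨hxT, hncard, hwx⟩ := hFmem x hxF
      apply assemble G σ k r w T hT i {(⟨x, hxT⟩ : T.verts)} (hsingle_conn _)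
        (fun _ => 1) (fun _ => Or.inl rfl)
      · intro a b ha hb hadj
        rw [Finset.mem_singleton] at ha hb
        subst ha; subst hb
        exact absurd rfl (T.adj_sub hadj).ne
      · have hsum1 : (∑ y ∈ ({(⟨x, hxT⟩ : T.verts)} : Finset T.verts), (1:ℤ) * w i ↑y)
            = w i x := by simp
        rw [hsum1]
        have hb1 : (r:ℚ) / (2 * k) ≤ 1 := by
          rw [div_le_one h2k]
          have hcard2 : (F i).card ≤ 2 := by omega
          have hr2k : r ≤ 2 * k := by
            refine le_trans hrk ?_
            calc k * (F i).card ≤ k * 2 := Nat.mul_le_mul_left k hcard2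
              _ = 2 * k := Nat.mul_comm k 2
          exact_mod_cast hr2k
        refine le_trans hb1 ?_
        have : (1:ℤ) ≤ |w i x| := Int.one_le_abs hwx
        calc (1:ℚ) = ((1:ℤ):ℚ) := by norm_num
          _ ≤ ((|w i x| : ℤ) : ℚ) := by exact_mod_cast this
          _ = |((w i x : ℤ) : ℚ)| := by push_cast; ring
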